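/- The Peres gate, i.e. the permutation of three-qubit basis states |a,b,c⟩ ↦ |a, a XOR b, (a AND b) XOR c⟩, is realized exactly by the four two-qubit gates CV†(2,3) · CNOT(1,2) · CV(2,3) · CV(1,3) as 8×8 complex matrices (matrix product written with the last-applied gate on the left). -/
import Mathlib


open Complex Matrix Kronecker

noncomputable def V : Matrix (Fin 2) (Fin 2) ℂ :=
  !![(1 + I)/2, (1 - I)/2; (1 - I)/2, (1 + I)/2]

noncomputable def I₂ : Matrix (Fin 2) (Fin 2) ℂ := 1

noncomputable def P₀ : Matrix (Fin 2) (Fin 2) ℂ := !![1, 0; 0, 0]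

noncomputable def P₁ : Matrix (Fin 2) (Fin 2) ℂ := !![0, 0; 0, 1]

noncomputable def X : Matrix (Fin 2) (Fin 2) ℂ := !![0, 1; 1, 0]

/-- CV(1,3): apply V to qubit 3 when qubit 1 is 1. -/
noncomputable def CV13 := P₀ ⊗ₖ I₂ ⊗ₖ I₂ + P₁ ⊗ₖ I₂ ⊗ₖ V

/-- CV(2,3): apply V to qubit 3 when qubit 2 is 1. -/
noncomputable def CV23 := I₂ ⊗ₖ P₀ ⊗ₖ I₂ + I₂ ⊗ₖ P₁ ⊗ₖ V

/-- CV†(2,3): apply V† to qubit 3 when qubit 2 is 1. -/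
noncomputable def CVd23 := I₂ ⊗ₖ P₀ ⊗ₖ I₂ + I₂ ⊗ₖ P₁ ⊗ₖ Vᴴ

/-- CNOT(1,2): flip qubit 2 when qubit 1 is 1. -/
noncomputable def CNOT12 := P₀ ⊗ₖ I₂ ⊗ₖ I₂ + P₁ ⊗ₖ X ⊗ₖ I₂

/-- The Peres gate: the permutation matrix sending the basis vector indexed by
(a,b,c) to the basis vector indexed by (a, a XOR b, (a AND b) XOR c); in `Fin 2`,
XOR is addition and AND is multiplication. -/
noncomputable def Peres : Matrix ((Fin 2 × Fin 2) × Fin 2) ((Fin 2 × Fin 2) × Fin 2) ℂ :=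
  Matrix.of fun i j =>
    if i = ((j.1.1, j.1.1 + j.1.2), j.1.1 * j.1.2 + j.2) then 1 else 0


noncomputable def E01 : Matrix (Fin 2) (Fin 2) ℂ := !![0, 1; 0, 0]
noncomputable def E10 : Matrix (Fin 2) (Fin 2) ℂ := !![0, 0; 1, 0]

lemma hVV : V * V = X := by
  simp only [V, X, Matrix.mul_fin_two]
  ext i j
  fin_cases i <;> fin_cases j <;> simp [Complex.ext_iff] <;>
    ring_nf <;> simp [Complex.I_sq]

lemma hVd : Vᴴ = !![(1 - I)/2, (1 + I)/2; (1 + I)/2, (1 - I)/2] := by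
  ext i j
  fin_cases i <;> fin_cases j <;> simp [V, conjTranspose_apply, Complex.ext_iff]

lemma hWV : Vᴴ * V = 1 := by
  rw [hVd]
  simp only [V, Matrix.mul_fin_two]
  ext i j
  fin_cases i <;> fin_cases j <;> simp [Matrix.one_apply, Complex.ext_iff] <;>
    ring_nf <;> simp [Complex.I_sq]

lemma hP00 : P₀ * P₀ = P₀ := by
  simp only [P₀, Matrix.mul_fin_two]; ext i j; fin_cases i <;> fin_cases j <;> simp
lemma hP01 : P₀ * P₁ = 0 := by
  simp only [P₀, P₁, Matrix.mul_fin_two]; ext i j; fin_cases i <;> fin_cases j <;> simp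
lemma hP10 : P₁ * P₀ = 0 := by
  simp only [P₀, P₁, Matrix.mul_fin_two]; ext i j; fin_cases i <;> fin_cases j <;> simp
lemma hP11 : P₁ * P₁ = P₁ := by
  simp only [P₁, Matrix.mul_fin_two]; ext i j; fin_cases i <;> fin_cases j <;> simp
lemma hP0X : P₀ * X = E01 := by
  simp only [P₀, X, E01, Matrix.mul_fin_two]; ext i j; fin_cases i <;> fin_cases j <;> simp
lemma hP1X : P₁ * X = E10 := by
  simp only [P₁, X, E10, Matrix.mul_fin_two]; ext i j; fin_cases i <;> fin_cases j <;> simp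
lemma hE01P0 : E01 * P₀ = 0 := by
  simp only [E01, P₀, Matrix.mul_fin_two]; ext i j; fin_cases i <;> fin_cases j <;> simp
lemma hE01P1 : E01 * P₁ = E01 := by
  simp only [E01, P₁, Matrix.mul_fin_two]; ext i j; fin_cases i <;> fin_cases j <;> simp
lemma hE10P0 : E10 * P₀ = E10 := by
  simp only [E10, P₀, Matrix.mul_fin_two]; ext i j; fin_cases i <;> fin_cases j <;> simp
lemma hE10P1 : E10 * P₁ = 0 := by
  simp only [E10, P₁, Matrix.mul_fin_two]; ext i j; fin_cases i <;> fin_cases j <;> simp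

lemma hI2 : I₂ = 1 := rfl

lemma peres_eq_sum : Peres =
    P₀ ⊗ₖ P₀ ⊗ₖ I₂ + P₀ ⊗ₖ P₁ ⊗ₖ I₂ + P₁ ⊗ₖ E01 ⊗ₖ X + P₁ ⊗ₖ E10 ⊗ₖ I₂ := by
  ext ⟨⟨a, b⟩, c⟩ ⟨⟨d, e⟩, f⟩
  fin_cases a <;> fin_cases b <;> fin_cases c <;> fin_cases d <;> fin_cases e <;> fin_cases f <;>
    simp [Peres, P₀, P₁, E01, E10, X, I₂, Matrix.one_apply] <;> decide

/-- The Peres gate is realized exactly by four two-qubit gates. -/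
theorem peres_four_gate_decomposition :
    CVd23 * CNOT12 * CV23 * CV13 = Peres := by
  rw [peres_eq_sum, CVd23, CNOT12, CV23, CV13, hI2]
  simp only [add_mul, mul_add, ← Matrix.mul_kronecker_mul, hP00, hP01, hP10, hP11,
    hP0X, hP1X, hE01P0, hE01P1, hE10P0, hE10P1, hVV, hWV, one_mul, mul_one,
    Matrix.zero_kronecker, Matrix.kronecker_zero, zero_mul, mul_zero,
    Matrix.zero_mul, Matrix.mul_zero, add_zero, zero_add]
  abel
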